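/- Let n ≥ 1 be a natural number, E a finite-dimensional real normed vector space, H : ℝ → ℝ a differentiable function, and T, N, y : ℝ → E differentiable functions satisfying, for all s: T'(s) = −(n H(s)/2)·N(s) − y(s), N'(s) = (n H(s)/2)·T(s), and y'(s) = T(s). Define κ(s) = √(1 + n²H(s)²/4), τ(s) = 2 n H'(s)/(4 + n²H(s)²), 𝐧(s) = −(n H(s)/√(4 + n²H(s)²))·N(s) − (2/√(4 + n²H(s)²))·y(s), and 𝐛(s) = −(2/√(4 + n²H(s)²))·N(s) + (n H(s)/√(4 + n²H(s)²))·y(s). Then for all s: T'(s) = κ(s)·𝐧(s), 𝐧'(s) = −κ(s)·T(s) + τ(s)·𝐛(s), and 𝐛'(s) = −τ(s)·𝐧(s). -/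

import Mathlib

/-- Frenet–Serret computation for an integral curve of `e₁ = ∇H/|∇H|` on a
biconservative hypersurface of the sphere `Sⁿ⁺¹`. -/
theorem stmt_2 (n : ℕ) (hn : 1 ≤ n) (E : Type*) [NormedAddCommGroup E]
    [NormedSpace ℝ E] [FiniteDimensional ℝ E]
    (H : ℝ → ℝ) (hH : Differentiable ℝ H)
    (T N y : ℝ → E) (hT : Differentiable ℝ T) (hN : Differentiable ℝ N)
    (hy : Differentiable ℝ y)
    (hT' : ∀ s : ℝ, deriv T s = (-((n : ℝ) * H s / 2)) • N s - y s)
    (hN' : ∀ s : ℝ, deriv N s = ((n : ℝ) * H s / 2) • T s)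
    (hy' : ∀ s : ℝ, deriv y s = T s)
    (κ τ : ℝ → ℝ) (Fn Fb : ℝ → E)
    (hκ : ∀ s : ℝ, κ s = Real.sqrt (1 + (n : ℝ) ^ 2 * H s ^ 2 / 4))
    (hτ : ∀ s : ℝ, τ s = 2 * (n : ℝ) * deriv H s / (4 + (n : ℝ) ^ 2 * H s ^ 2))
    (hFn : ∀ s : ℝ, Fn s =
      (-((n : ℝ) * H s / Real.sqrt (4 + (n : ℝ) ^ 2 * H s ^ 2))) • N s
        - (2 / Real.sqrt (4 + (n : ℝ) ^ 2 * H s ^ 2)) • y s)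
    (hFb : ∀ s : ℝ, Fb s =
      (-(2 / Real.sqrt (4 + (n : ℝ) ^ 2 * H s ^ 2))) • N s
        + ((n : ℝ) * H s / Real.sqrt (4 + (n : ℝ) ^ 2 * H s ^ 2)) • y s) :
    ∀ s : ℝ, deriv T s = κ s • Fn s ∧
      deriv Fn s = (-(κ s)) • T s + τ s • Fb s ∧
      deriv Fb s = (-(τ s)) • Fn s := by
  intro s
  set Q : ℝ → ℝ := fun u => 4 + (n : ℝ) ^ 2 * H u ^ 2 with hQdef
  have hQpos : ∀ t, 0 < Q t := fun t => by positivity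
  set r : ℝ := Real.sqrt (Q s) with hrdef
  have hrpos : 0 < r := Real.sqrt_pos.mpr (hQpos s)
  have hr0 : r ≠ 0 := ne_of_gt hrpos
  have hr2 : r ^ 2 = 4 + (n : ℝ) ^ 2 * H s ^ 2 := Real.sq_sqrt (hQpos s).le
  -- κ = r/2
  have hκr : κ s = r / 2 := by
    rw [hκ, show 1 + (n : ℝ) ^ 2 * H s ^ 2 / 4 = (r / 2) ^ 2 by
      rw [div_pow, hr2]; ring]
    exact Real.sqrt_sq (by positivity)
  -- derivative of sqrt ∘ Q
  have hQd : HasDerivAt Q ((n : ℝ) ^ 2 * (2 * H s * deriv H s)) s := by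
    have h1 : HasDerivAt (fun u => H u ^ 2) (2 * H s * deriv H s) s := by
      have := ((hH s).hasDerivAt.pow 2)
      simpa [Pi.pow_def, mul_comm, mul_assoc, mul_left_comm] using this
    exact (h1.const_mul ((n : ℝ) ^ 2)).const_add 4
  have hrd : HasDerivAt (fun u => Real.sqrt (Q u))
      ((n : ℝ) ^ 2 * (2 * H s * deriv H s) / (2 * r)) s := by
    have := (Real.hasDerivAt_sqrt (ne_of_gt (hQpos s))).comp s hQd
    refine this.congr_deriv ?_
    rw [← hrdef]
    field_simp
  set r' : ℝ := (n : ℝ) ^ 2 * (2 * H s * deriv H s) / (2 * r) with hr'def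
  -- derivative of a = nH/sqrt Q and b = 2/sqrt Q
  have had : HasDerivAt (fun u => (n : ℝ) * H u / Real.sqrt (Q u))
      (((n : ℝ) * deriv H s * r - (n : ℝ) * H s * r') / r ^ 2) s :=
    ((hH s).hasDerivAt.const_mul ((n : ℝ))).div hrd hr0
  have hbd : HasDerivAt (fun u => 2 / Real.sqrt (Q u))
      ((0 * r - 2 * r') / r ^ 2) s :=
    (hasDerivAt_const s (2 : ℝ)).div hrd hr0
  set a' : ℝ := ((n : ℝ) * deriv H s * r - (n : ℝ) * H s * r') / r ^ 2
  set b' : ℝ := (0 * r - 2 * r') / r ^ 2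
  -- Fn and Fb as lambdas
  have hFneq : Fn = fun u => (-((n : ℝ) * H u / Real.sqrt (Q u))) • N u
      - (2 / Real.sqrt (Q u)) • y u := funext hFn
  have hFbeq : Fb = fun u => (-(2 / Real.sqrt (Q u))) • N u
      + ((n : ℝ) * H u / Real.sqrt (Q u)) • y u := funext hFb
  have hFnd : HasDerivAt Fn ((-((n : ℝ) * H s / r)) • deriv N s + (-a') • N s
      - ((2 / r) • deriv y s + b' • y s)) s := by
    rw [hFneq]
    exact (had.neg.smul (hN s).hasDerivAt).sub (hbd.smul (hy s).hasDerivAt)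
  have hFbd : HasDerivAt Fb ((-(2 / r)) • deriv N s + (-b') • N s
      + (((n : ℝ) * H s / r) • deriv y s + a' • y s)) s := by
    rw [hFbeq]
    exact (hbd.neg.smul (hN s).hasDerivAt).add (had.smul (hy s).hasDerivAt)
  have ha' : a' = 4 * (n : ℝ) * deriv H s / r ^ 3 := by
    show ((n : ℝ) * deriv H s * r - (n : ℝ) * H s * r') / r ^ 2 = _
    rw [hr'def]
    field_simp
    linear_combination (deriv H s) * hr2
  have hb' : b' = -(2 * (n : ℝ) ^ 2 * H s * deriv H s) / r ^ 3 := by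
    show (0 * r - 2 * r') / r ^ 2 = _
    rw [hr'def]
    field_simp
    ring
  refine ⟨?_, ?_, ?_⟩
  · rw [hT' s, hκr, hFn s, ← hrdef]
    match_scalars <;> (field_simp; try ring)
  · rw [hFnd.deriv, ha', hb', hN' s, hy' s, hκr, hτ s, hFb s, ← hrdef]
    match_scalars
    · field_simp
      linear_combination hr2
    · field_simp
      linear_combination (4 * deriv H s) * hr2
    · field_simp
      linear_combination (-(H s * deriv H s)) * hr2
  · rw [hFbd.deriv, ha', hb', hN' s, hy' s, hτ s, hFn s, ← hrdef]
    match_scalars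
    · field_simp
      ring
    · field_simp
      linear_combination (-(H s * deriv H s)) * hr2
    · field_simp
      linear_combination (-4 * deriv H s) * hr2
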